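/- Let p : ℕ → [1,∞]. The space ℓ^{p(·)} = {x ∈ ℓ^∞ : Φ_p(x) < ∞}, equipped with the metric d(x,y) = Φ_p(x−y), is a complete metric space; i.e., ℓ^{p(·)} with norm Φ_p is a Banach space. -/

import Mathlib

open scoped ENNReal

/-- `t ⊞_p s`: for `p < ∞`, `(t^p + s^p)^(1/p)`; for `p = ∞`, `max t s`. -/
noncomputable def boxPlus (p : ℝ≥0∞) (t s : ℝ) : ℝ :=
  if p = ∞ then max t s else (t ^ p.toReal + s ^ p.toReal) ^ (1 / p.toReal)

/-- The recursively defined seminorms `|||x|||_(k)` (0-indexed). -/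
noncomputable def seqNorm (p : ℕ → ℝ≥0∞) (x : ℕ → ℝ) : ℕ → ℝ
  | 0 => boxPlus (p 0) |x 0| |x 1|
  | k + 1 => boxPlus (p (k + 1)) (seqNorm p x k) |x (k + 2)|

/-- `Φ_p(x) = lim_k |||x|||_(k)`, as the supremum of the nondecreasing sequence. -/
noncomputable def Phi (p : ℕ → ℝ≥0∞) (x : ℕ → ℝ) : ℝ≥0∞ :=
  ⨆ k, ENNReal.ofReal (seqNorm p x k)

/-- `x` is a bounded real sequence, i.e. `x ∈ ℓ^∞`. -/
def IsBddSeq (x : ℕ → ℝ) : Prop := ∃ M : ℝ, ∀ n, |x n| ≤ M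

/-- Membership in the variable exponent space `ℓ^{p(·)}`. -/
def MemVLp (p : ℕ → ℝ≥0∞) (x : ℕ → ℝ) : Prop := IsBddSeq x ∧ Phi p x < ⊤

lemma toReal_pos {p : ℝ≥0∞} (hp : 1 ≤ p) (h : p ≠ ∞) : 0 < p.toReal := by
  refine ENNReal.toReal_pos (fun h0 => by simp [h0] at hp) h
lemma boxPlus_nonneg {p : ℝ≥0∞} {t s : ℝ} (ht : 0 ≤ t) (hs : 0 ≤ s) :
    0 ≤ boxPlus p t s := by
  unfold boxPlus
  split_ifs with h
  · exact le_max_of_le_left ht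
  · exact Real.rpow_nonneg (add_nonneg (Real.rpow_nonneg ht _) (Real.rpow_nonneg hs _)) _
lemma le_boxPlus_left {p : ℝ≥0∞} (hp : 1 ≤ p) {t s : ℝ} (ht : 0 ≤ t) (hs : 0 ≤ s) :
    t ≤ boxPlus p t s := by
  unfold boxPlus
  split_ifs with h
  · exact le_max_left _ _
  · have hc : 0 < p.toReal := toReal_pos hp h
    calc t = (t ^ p.toReal) ^ (1 / p.toReal) := by
            rw [one_div, Real.rpow_rpow_inv ht hc.ne']
      _ ≤ (t ^ p.toReal + s ^ p.toReal) ^ (1 / p.toReal) := by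
            apply Real.rpow_le_rpow (Real.rpow_nonneg ht _)
              (le_add_of_nonneg_right (Real.rpow_nonneg hs _)) (by positivity)
lemma le_boxPlus_right {p : ℝ≥0∞} (hp : 1 ≤ p) {t s : ℝ} (ht : 0 ≤ t) (hs : 0 ≤ s) :
    s ≤ boxPlus p t s := by
  unfold boxPlus
  split_ifs with h
  · exact le_max_right _ _
  · have hc : 0 < p.toReal := toReal_pos hp h
    calc s = (s ^ p.toReal) ^ (1 / p.toReal) := by
            rw [one_div, Real.rpow_rpow_inv hs hc.ne']
      _ ≤ (t ^ p.toReal + s ^ p.toReal) ^ (1 / p.toReal) := by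
            apply Real.rpow_le_rpow (Real.rpow_nonneg hs _)
              (le_add_of_nonneg_left (Real.rpow_nonneg ht _)) (by positivity)
lemma boxPlus_mono {p : ℝ≥0∞} {t s t' s' : ℝ} (ht : 0 ≤ t) (hs : 0 ≤ s)
    (h1 : t ≤ t') (h2 : s ≤ s') : boxPlus p t s ≤ boxPlus p t' s' := by
  unfold boxPlus
  split_ifs with h
  · exact max_le_max h1 h2
  · apply Real.rpow_le_rpow (add_nonneg (Real.rpow_nonneg ht _) (Real.rpow_nonneg hs _))
      (add_le_add (Real.rpow_le_rpow ht h1 ENNReal.toReal_nonneg)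
        (Real.rpow_le_rpow hs h2 ENNReal.toReal_nonneg)) (by positivity)
lemma boxPlus_triangle {p : ℝ≥0∞} (hp : 1 ≤ p) {a b a' b' : ℝ}
    (ha : 0 ≤ a) (hb : 0 ≤ b) (ha' : 0 ≤ a') (hb' : 0 ≤ b') :
    boxPlus p (a + a') (b + b') ≤ boxPlus p a b + boxPlus p a' b' := by
  unfold boxPlus
  split_ifs with h
  · exact max_le (add_le_add (le_max_left _ _) (le_max_left _ _))
      (add_le_add (le_max_right _ _) (le_max_right _ _))
  · have hc : 1 ≤ p.toReal := by
      rw [← ENNReal.toReal_one]; exact ENNReal.toReal_mono h hp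
    have := Real.Lp_add_le (Finset.univ : Finset (Fin 2)) ![a, b] ![a', b'] hc
    simpa [Fin.sum_univ_two, abs_of_nonneg, ha, hb, ha', hb', add_nonneg ha ha',
      add_nonneg hb hb'] using this
lemma boxPlus_tendsto {p : ℝ≥0∞} (hp : 1 ≤ p) {a b : ℕ → ℝ} {A B : ℝ}
    (hA : Filter.Tendsto a Filter.atTop (nhds A)) (hB : Filter.Tendsto b Filter.atTop (nhds B)) :
    Filter.Tendsto (fun k => boxPlus p (a k) (b k)) Filter.atTop (nhds (boxPlus p A B)) := by
  unfold boxPlus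
  split_ifs with h
  · exact hA.max hB
  · have hc : 0 < p.toReal := toReal_pos hp h
    have h1 : ∀ x : ℝ, ContinuousAt (fun t : ℝ => t ^ p.toReal) x := fun x =>
      Real.continuousAt_rpow_const x _ (Or.inr hc.le)
    have h2 := ((h1 A).tendsto.comp hA).add ((h1 B).tendsto.comp hB)
    exact ((Real.continuousAt_rpow_const _ (1 / p.toReal) (Or.inr (by positivity))).tendsto.comp h2)
lemma seqNorm_nonneg (p : ℕ → ℝ≥0∞) (x : ℕ → ℝ) : ∀ k, 0 ≤ seqNorm p x k
  | 0 => boxPlus_nonneg (abs_nonneg _) (abs_nonneg _)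
  | k + 1 => boxPlus_nonneg (seqNorm_nonneg p x k) (abs_nonneg _)
lemma seqNorm_mono_pt (p : ℕ → ℝ≥0∞) {x y : ℕ → ℝ} (h : ∀ n, |x n| ≤ |y n|) :
    ∀ k, seqNorm p x k ≤ seqNorm p y k
  | 0 => boxPlus_mono (abs_nonneg _) (abs_nonneg _) (h 0) (h 1)
  | k + 1 => boxPlus_mono (seqNorm_nonneg p x k) (abs_nonneg _)
      (seqNorm_mono_pt p h k) (h (k + 2))
lemma seqNorm_congr (p : ℕ → ℝ≥0∞) {x y : ℕ → ℝ} (h : ∀ n, |x n| = |y n|) (k : ℕ) :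
    seqNorm p x k = seqNorm p y k :=
  le_antisymm (seqNorm_mono_pt p (fun n => (h n).le) k)
    (seqNorm_mono_pt p (fun n => (h n).ge) k)
lemma abs_le_seqNorm (p : ℕ → ℝ≥0∞) (hp : ∀ n, 1 ≤ p n) (x : ℕ → ℝ) :
    ∀ k n, n ≤ k + 1 → |x n| ≤ seqNorm p x k := by
  intro k
  induction k with
  | zero =>
    intro n hn
    interval_cases n
    · exact le_boxPlus_left (hp 0) (abs_nonneg _) (abs_nonneg _)
    · exact le_boxPlus_right (hp 0) (abs_nonneg _) (abs_nonneg _)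
  | succ k ih =>
    intro n hn
    rcases eq_or_lt_of_le hn with h | h
    · rw [h]
      exact le_boxPlus_right (hp (k + 1)) (seqNorm_nonneg p x k) (abs_nonneg _)
    · exact le_trans (ih n (by omega))
        (le_boxPlus_left (hp (k + 1)) (seqNorm_nonneg p x k) (abs_nonneg _))
lemma seqNorm_add_le (p : ℕ → ℝ≥0∞) (hp : ∀ n, 1 ≤ p n) (x y : ℕ → ℝ) :
    ∀ k, seqNorm p (x + y) k ≤ seqNorm p x k + seqNorm p y k := by
  intro k
  induction k with
  | zero =>
    refine le_trans (boxPlus_mono (abs_nonneg _) (abs_nonneg _)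
      (abs_add_le (x 0) (y 0)) (abs_add_le (x 1) (y 1))) ?_
    exact boxPlus_triangle (hp 0) (abs_nonneg _) (abs_nonneg _) (abs_nonneg _) (abs_nonneg _)
  | succ k ih =>
    refine le_trans (boxPlus_mono (seqNorm_nonneg p (x + y) k) (abs_nonneg _)
      ih (abs_add_le (x (k + 2)) (y (k + 2)))) ?_
    exact boxPlus_triangle (hp (k + 1)) (seqNorm_nonneg p x k) (abs_nonneg _)
      (seqNorm_nonneg p y k) (abs_nonneg _)
lemma Phi_add_le (p : ℕ → ℝ≥0∞) (hp : ∀ n, 1 ≤ p n) (x y : ℕ → ℝ) :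
    Phi p (x + y) ≤ Phi p x + Phi p y := by
  refine iSup_le fun k => ?_
  calc ENNReal.ofReal (seqNorm p (x + y) k)
      ≤ ENNReal.ofReal (seqNorm p x k + seqNorm p y k) :=
        ENNReal.ofReal_le_ofReal (seqNorm_add_le p hp x y k)
    _ ≤ ENNReal.ofReal (seqNorm p x k) + ENNReal.ofReal (seqNorm p y k) :=
        ENNReal.ofReal_add_le
    _ ≤ Phi p x + Phi p y := add_le_add (le_iSup (fun k => ENNReal.ofReal (seqNorm p x k)) k) (le_iSup (fun k => ENNReal.ofReal (seqNorm p y k)) k)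
lemma seqNorm_tendsto (p : ℕ → ℝ≥0∞) (hp : ∀ n, 1 ≤ p n) {v : ℕ → ℕ → ℝ} {w : ℕ → ℝ}
    (h : ∀ n, Filter.Tendsto (fun j => v j n) Filter.atTop (nhds (w n))) (k : ℕ) :
    Filter.Tendsto (fun j => seqNorm p (v j) k) Filter.atTop (nhds (seqNorm p w k)) := by
  induction k with
  | zero => exact boxPlus_tendsto (hp 0) ((h 0).abs) ((h 1).abs)
  | succ k ih => exact boxPlus_tendsto (hp (k + 1)) ih ((h (k + 2)).abs)

theorem lp_var_complete (p : ℕ → ℝ≥0∞) (hp : ∀ n, 1 ≤ p n)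
    (u : ℕ → ℕ → ℝ) (hu : ∀ j, MemVLp p (u j))
    (hcauchy : ∀ ε : ℝ, 0 < ε → ∃ N : ℕ, ∀ j k, N ≤ j → N ≤ k →
      Phi p (u j - u k) < ENNReal.ofReal ε) :
    ∃ x : ℕ → ℝ, MemVLp p x ∧
      Filter.Tendsto (fun j => Phi p (u j - x)) Filter.atTop (nhds 0) := by
  -- uniform bound on the finite seminorms of differences
  have key0 : ∀ ε : ℝ, 0 < ε → ∃ N, ∀ j k, N ≤ j → N ≤ k →
      ∀ m, seqNorm p (u j - u k) m < ε := by
    intro ε hε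
    obtain ⟨N, hN⟩ := hcauchy ε hε
    exact ⟨N, fun j k hj hk m => (ENNReal.ofReal_lt_ofReal_iff hε).mp
      (lt_of_le_of_lt (le_iSup (fun m => ENNReal.ofReal (seqNorm p (u j - u k) m)) m)
        (hN j k hj hk))⟩
  -- each coordinate is Cauchy; get pointwise limit x
  have hcoord : ∀ n, ∃ l, Filter.Tendsto (fun j => u j n) Filter.atTop (nhds l) := by
    intro n
    have hc : CauchySeq (fun j => u j n) := by
      rw [Metric.cauchySeq_iff]
      intro ε hε
      obtain ⟨N, hN⟩ := key0 ε hε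
      refine ⟨N, fun j hj k hk => ?_⟩
      have h1 : |u j n - u k n| ≤ seqNorm p (u j - u k) n := by
        simpa using abs_le_seqNorm p hp (u j - u k) n n (by omega)
      calc dist (u j n) (u k n) = |u j n - u k n| := Real.dist_eq _ _
        _ ≤ seqNorm p (u j - u k) n := h1
        _ < ε := hN j k hj hk n
    exact cauchySeq_tendsto_of_complete hc
  choose x hx using hcoord
  -- main estimate: for j large, all finite seminorms of u j - x are ≤ ε
  have key : ∀ ε : ℝ, 0 < ε → ∃ N, ∀ j, N ≤ j →
      ∀ m, seqNorm p (u j - x) m ≤ ε := by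
    intro ε hε
    obtain ⟨N, hN⟩ := key0 ε hε
    refine ⟨N, fun j hj m => ?_⟩
    have ht : Filter.Tendsto (fun k => seqNorm p (u j - u k) m) Filter.atTop
        (nhds (seqNorm p (u j - x) m)) := by
      have : ∀ n, Filter.Tendsto (fun k => (u j - u k) n) Filter.atTop
          (nhds ((u j - x) n)) := fun n => (hx n).const_sub (u j n)
      exact seqNorm_tendsto p hp this m
    exact le_of_tendsto ht (Filter.eventually_atTop.2
      ⟨N, fun k hk => (hN j k hj hk m).le⟩)
  obtain ⟨N₁, hN₁⟩ := key 1 one_pos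
  have hxuN : ∀ n, |u N₁ n - x n| ≤ 1 := by
    intro n
    exact le_trans (by simpa using abs_le_seqNorm p hp (u N₁ - x) n n (by omega))
      (hN₁ N₁ le_rfl n)
  refine ⟨x, ⟨?_, ?_⟩, ?_⟩
  · -- boundedness
    obtain ⟨M, hM⟩ := (hu N₁).1
    refine ⟨M + 1, fun n => ?_⟩
    have h2 := hxuN n
    have h3 := hM n
    have h4 : |x n| - |u N₁ n| ≤ |x n - u N₁ n| := abs_sub_abs_le_abs_sub _ _
    rw [abs_sub_comm] at h4
    linarith
  · -- Phi p x < ⊤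
    have h1 : Phi p (u N₁ - x) ≤ 1 := by
      refine iSup_le fun m => ?_
      calc ENNReal.ofReal (seqNorm p (u N₁ - x) m) ≤ ENNReal.ofReal 1 :=
            ENNReal.ofReal_le_ofReal (hN₁ N₁ le_rfl m)
        _ = 1 := ENNReal.ofReal_one
    have hneg : Phi p (-(u N₁ - x)) = Phi p (u N₁ - x) := by
      unfold Phi
      exact iSup_congr fun m => by
        rw [seqNorm_congr p (y := u N₁ - x) (fun n => by simp [abs_sub_comm]) m]
    have h2 : Phi p x ≤ Phi p (u N₁) + Phi p (-(u N₁ - x)) := by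
      have := Phi_add_le p hp (u N₁) (-(u N₁ - x))
      have he : u N₁ + -(u N₁ - x) = x := by ring
      rwa [he] at this
    calc Phi p x ≤ Phi p (u N₁) + Phi p (-(u N₁ - x)) := h2
      _ = Phi p (u N₁) + Phi p (u N₁ - x) := by rw [hneg]
      _ ≤ Phi p (u N₁) + 1 := add_le_add_right h1 _
      _ < ⊤ := by
          have := (hu N₁).2
          exact ENNReal.add_lt_top.2 ⟨this, ENNReal.one_lt_top⟩
  · -- convergence
    rw [ENNReal.tendsto_atTop_zero]
    intro ε hε
    set δ := min 1 ε with hδ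
    have hδtop : δ ≠ ⊤ := ne_top_of_le_ne_top ENNReal.one_ne_top (min_le_left _ _)
    have hδ0 : 0 < δ.toReal :=
      ENNReal.toReal_pos (ne_of_gt (lt_min zero_lt_one hε)) hδtop
    obtain ⟨N, hN⟩ := key δ.toReal hδ0
    refine ⟨N, fun j hj => ?_⟩
    calc Phi p (u j - x) ≤ ENNReal.ofReal δ.toReal :=
          iSup_le fun m => ENNReal.ofReal_le_ofReal (hN j hj m)
      _ = δ := ENNReal.ofReal_toReal hδtop
      _ ≤ ε := min_le_right _ _
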